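/- Let 0 < p ≤ ∞, 1 < p, and suppose f : ℝ → ℝ is locally absolutely continuous with f' ∈ L^p(ℝ). Then for every j ≥ 0 and ν ∈ ℤ, |2^{j+1} ∫ f(x) h̃_{j,ν}(x) dx| ≤ C · 2^{-j/p'} · (∫_{[ν 2^{-j-1}, (ν+2) 2^{-j-1}]} |f'|^p dx)^{1/p}, where 1/p + 1/p' = 1 and C is an absolute constant. -/

import Mathlib

open MeasureTheory Real

/-- The Haar mother function `h = 𝟙_{[0,1/2)} - 𝟙_{[1/2,1)}`. -/
noncomputable def haar (x : ℝ) : ℝ :=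
  if 0 ≤ x ∧ x < 1/2 then 1 else if 1/2 ≤ x ∧ x < 1 then -1 else 0

/-- For `1 < p` and `f` locally absolutely continuous with `f' ∈ L^p`,
`|2^{j+1} ∫ f h̃_{j,ν}| ≤ C 2^{-j/p'} (∫_{[ν2^{-j-1},(ν+2)2^{-j-1}]} |f'|^p)^{1/p}`
with an absolute constant `C`. -/
theorem shifted_haar_coefficient_bound :
    ∃ C : ℝ, 0 < C ∧
      ∀ (p p' : ℝ), 1 < p → 1 / p + 1 / p' = 1 →
      ∀ (f f' : ℝ → ℝ),
        (∀ x : ℝ, f x = f 0 + ∫ t in (0:ℝ)..x, f' t) →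
        LocallyIntegrable f' volume →
        MemLp f' (ENNReal.ofReal p) volume →
        ∀ (j : ℕ) (ν : ℤ),
          |2 ^ (j+1) * ∫ x : ℝ, f x * haar (2 ^ j * x - (ν : ℝ) / 2)| ≤
            C * 2 ^ (-(j:ℝ) / p') *
              (∫ x in Set.Icc ((ν : ℝ) * 2 ^ (-(j:ℝ) - 1)) (((ν : ℝ) + 2) * 2 ^ (-(j:ℝ) - 1)),
                |f' x| ^ p) ^ (1/p) := by
  refine ⟨2, two_pos, ?_⟩
  intro p p' hp hpp' f f' hf hf'loc hf'mem j ν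
  have hpq : Real.HolderConjugate p p' := Real.holderConjugate_iff.mpr ⟨hp, by simpa [one_div] using hpp'⟩
  have hp'pos : 0 < p' := hpq.symm.pos
  set A : ℝ := 2 ^ j with hA_def
  have hA : (0:ℝ) < A := by positivity
  have hpow : (2:ℝ) ^ (-(j:ℝ) - 1) = (2 * A)⁻¹ := by
    rw [hA_def, ← Real.rpow_natCast 2 j,
      show (-(j:ℝ) - 1) = -((j:ℝ) + 1) by ring, Real.rpow_neg (by norm_num),
      Real.rpow_add (by norm_num), Real.rpow_one, mul_comm]
  set a : ℝ := (ν : ℝ) * 2 ^ (-(j:ℝ) - 1) with ha_def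
  set b : ℝ := ((ν : ℝ) + 2) * 2 ^ (-(j:ℝ) - 1) with hb_def
  set m : ℝ := ((ν : ℝ) + 1) * 2 ^ (-(j:ℝ) - 1) with hm_def
  have h2Apos : (0:ℝ) < 2 * A := by positivity
  have ham : a < m := by
    rw [ha_def, hm_def, hpow]
    exact mul_lt_mul_of_pos_right (by linarith) (by positivity)
  have hmb : m < b := by
    rw [hm_def, hb_def, hpow]
    exact mul_lt_mul_of_pos_right (by linarith) (by positivity)
  have hab : a < b := ham.trans hmb
  -- interval integrability of f'
  have hii : ∀ u v : ℝ, IntervalIntegrable f' volume u v := fun u v =>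
    intervalIntegrable_iff.mpr
      ((hf'loc.integrableOn_isCompact isCompact_uIcc).mono_set Set.uIoc_subset_uIcc)
  -- continuity of f
  have hfc : Continuous f := by
    have hfe : f = fun x => f 0 + ∫ t in (0:ℝ)..x, f' t := funext hf
    rw [hfe]
    exact continuous_const.add (intervalIntegral.continuous_primitive hii 0)
  -- membership iffs
  have hmem1 : ∀ x : ℝ, x ∈ Set.Ico a m ↔ (0 ≤ A * x - (ν:ℝ)/2 ∧ A * x - (ν:ℝ)/2 < 1/2) := by
    intro x
    rw [Set.mem_Ico, ha_def, hm_def, hpow, ← div_eq_mul_inv, ← div_eq_mul_inv,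
      div_le_iff₀ h2Apos, lt_div_iff₀ h2Apos]
    constructor <;> rintro ⟨h1, h2⟩ <;> constructor <;> nlinarith
  have hmem2 : ∀ x : ℝ, x ∈ Set.Ico m b ↔ (1/2 ≤ A * x - (ν:ℝ)/2 ∧ A * x - (ν:ℝ)/2 < 1) := by
    intro x
    rw [Set.mem_Ico, hm_def, hb_def, hpow, ← div_eq_mul_inv, ← div_eq_mul_inv,
      div_le_iff₀ h2Apos, lt_div_iff₀ h2Apos]
    constructor <;> rintro ⟨h1, h2⟩ <;> constructor <;> nlinarith
  -- pointwise identity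
  have key : ∀ x : ℝ, f x * haar (A * x - (ν:ℝ)/2) =
      Set.indicator (Set.Ico a m) f x - Set.indicator (Set.Ico m b) f x := by
    intro x
    unfold haar
    by_cases hc1 : 0 ≤ A * x - (ν:ℝ)/2 ∧ A * x - (ν:ℝ)/2 < 1/2
    · rw [if_pos hc1, Set.indicator_of_mem ((hmem1 x).mpr hc1),
        Set.indicator_of_notMem (by rw [hmem2 x]; rintro ⟨h1, -⟩; linarith [hc1.2])]
      ring
    · rw [if_neg hc1]
      by_cases hc2 : 1/2 ≤ A * x - (ν:ℝ)/2 ∧ A * x - (ν:ℝ)/2 < 1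
      · rw [if_pos hc2, Set.indicator_of_notMem (by rw [hmem1 x]; exact hc1),
          Set.indicator_of_mem ((hmem2 x).mpr hc2)]
        ring
      · rw [if_neg hc2, Set.indicator_of_notMem (by rw [hmem1 x]; exact hc1),
          Set.indicator_of_notMem (by rw [hmem2 x]; exact hc2)]
        ring
  -- integrability of indicators
  have hint1 : Integrable (Set.indicator (Set.Ico a m) f) volume :=
    ((hfc.integrableOn_Icc).mono_set Set.Ico_subset_Icc_self).integrable_indicator
      measurableSet_Ico
  have hint2 : Integrable (Set.indicator (Set.Ico m b) f) volume :=
    ((hfc.integrableOn_Icc).mono_set Set.Ico_subset_Icc_self).integrable_indicator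
      measurableSet_Ico
  -- rewrite the integral
  have hIeq : (∫ x : ℝ, f x * haar (A * x - (ν:ℝ)/2)) =
      (∫ x in a..m, f x) - ∫ x in m..b, f x := by
    calc (∫ x : ℝ, f x * haar (A * x - (ν:ℝ)/2))
        = ∫ x : ℝ, (Set.indicator (Set.Ico a m) f x - Set.indicator (Set.Ico m b) f x) := by
          simp_rw [key]
      _ = (∫ x : ℝ, Set.indicator (Set.Ico a m) f x) -
            ∫ x : ℝ, Set.indicator (Set.Ico m b) f x := integral_sub hint1 hint2
      _ = (∫ x in Set.Ico a m, f x) - ∫ x in Set.Ico m b, f x := by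
          rw [integral_indicator measurableSet_Ico, integral_indicator measurableSet_Ico]
      _ = (∫ x in a..m, f x) - ∫ x in m..b, f x := by
          rw [setIntegral_congr_set (Ico_ae_eq_Ioc (μ := volume)),
            setIntegral_congr_set (Ico_ae_eq_Ioc (μ := volume)),
            intervalIntegral.integral_of_le ham.le, intervalIntegral.integral_of_le hmb.le]
  set M : ℝ := ∫ x in Set.Icc a b, |f' x| with hM_def
  have hM0 : 0 ≤ M := integral_nonneg fun x => abs_nonneg _
  have habsint : IntegrableOn (fun x => |f' x|) (Set.Icc a b) volume :=
    (hf'loc.integrableOn_isCompact isCompact_Icc).abs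
  -- |f x - f m| ≤ M on [a,b]
  have hfsub : ∀ x ∈ Set.Icc a b, |f x - f m| ≤ M := by
    intro x hx
    have hdiff : f x - f m = ∫ t in m..x, f' t := by
      rw [hf x, hf m]
      have := intervalIntegral.integral_interval_sub_left (hii 0 x) (hii 0 m)
      rw [← this]; ring
    rw [hdiff]
    calc |∫ t in m..x, f' t| ≤ ∫ t in Set.uIoc m x, |f' t| := by
          simpa [Real.norm_eq_abs] using
            intervalIntegral.norm_integral_le_integral_norm_uIoc (f := f') (a := m) (b := x)
      _ ≤ M := by
          refine setIntegral_mono_set habsint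
            (Filter.Eventually.of_forall fun t => abs_nonneg _) ?_
          refine HasSubset.Subset.eventuallyLE ?_
          refine Set.uIoc_subset_uIcc.trans ?_
          apply Set.uIcc_subset_Icc ⟨ham.le, hmb.le⟩ hx
  have hflen : m - a = b - m := by
    rw [ha_def, hm_def, hb_def]; ring
  have hfint1 : IntervalIntegrable f volume a m := hfc.intervalIntegrable a m
  have hfint2 : IntervalIntegrable f volume m b := hfc.intervalIntegrable m b
  -- the main bound on the difference of interval integrals
  have hstep : |(∫ x in a..m, f x) - ∫ x in m..b, f x| ≤ (b - a) * M := by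
    have e1 : (∫ x in a..m, f x) = (∫ x in a..m, (f x - f m)) + (m - a) * f m := by
      rw [intervalIntegral.integral_sub hfint1 (intervalIntegrable_const)]
      simp [intervalIntegral.integral_const, smul_eq_mul]
    have e2 : (∫ x in m..b, f x) = (∫ x in m..b, (f x - f m)) + (b - m) * f m := by
      rw [intervalIntegral.integral_sub hfint2 (intervalIntegrable_const)]
      simp [intervalIntegral.integral_const, smul_eq_mul]
    have b1 : |∫ x in a..m, (f x - f m)| ≤ (m - a) * M := by
      calc |∫ x in a..m, (f x - f m)| ≤ ∫ x in a..m, |f x - f m| :=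
            intervalIntegral.abs_integral_le_integral_abs ham.le
        _ ≤ ∫ _x in a..m, M := by
            apply intervalIntegral.integral_mono_on ham.le
              (hfint1.sub intervalIntegrable_const).abs intervalIntegrable_const
            intro x hx
            exact hfsub x ⟨hx.1, hx.2.trans hmb.le⟩
        _ = (m - a) * M := by simp [intervalIntegral.integral_const, smul_eq_mul]
    have b2 : |∫ x in m..b, (f x - f m)| ≤ (b - m) * M := by
      calc |∫ x in m..b, (f x - f m)| ≤ ∫ x in m..b, |f x - f m| :=
            intervalIntegral.abs_integral_le_integral_abs hmb.le
        _ ≤ ∫ _x in m..b, M := by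
            apply intervalIntegral.integral_mono_on hmb.le
              (hfint2.sub intervalIntegrable_const).abs intervalIntegrable_const
            intro x hx
            exact hfsub x ⟨ham.le.trans hx.1, hx.2⟩
        _ = (b - m) * M := by simp [intervalIntegral.integral_const, smul_eq_mul]
    calc |(∫ x in a..m, f x) - ∫ x in m..b, f x|
        = |(∫ x in a..m, (f x - f m)) - ∫ x in m..b, (f x - f m)| := by
          rw [e1, e2, hflen]; congr 1; ring
      _ ≤ |∫ x in a..m, (f x - f m)| + |∫ x in m..b, (f x - f m)| := abs_sub _ _
      _ ≤ (m - a) * M + (b - m) * M := add_le_add b1 b2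
      _ = (b - a) * M := by ring
  -- Hölder's inequality
  set J : ℝ := ∫ x in Set.Icc a b, |f' x| ^ p with hJ_def
  have hJ0 : 0 ≤ J := integral_nonneg fun x => Real.rpow_nonneg (abs_nonneg _) p
  have hba : b - a = (2:ℝ) ^ (-(j:ℝ)) := by
    rw [ha_def, hb_def, hpow]
    rw [show ((ν:ℝ) + 2) * (2*A)⁻¹ - (ν:ℝ) * (2*A)⁻¹ = 2 * (2*A)⁻¹ by ring]
    rw [hA_def, ← Real.rpow_natCast 2 j, Real.rpow_neg (by norm_num)]
    rw [mul_inv, ← mul_assoc, mul_inv_cancel₀ (by norm_num)]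
    ring
  haveI hfinm : IsFiniteMeasure (volume.restrict (Set.Icc a b)) := by
    constructor
    rw [Measure.restrict_apply_univ]
    exact measure_Icc_lt_top
  have holder : M ≤ J ^ (1/p) * (b - a) ^ (1/p') := by
    have hmem1' : MemLp (fun x => |f' x|) (ENNReal.ofReal p)
        (volume.restrict (Set.Icc a b)) := (hf'mem.restrict _).norm
    have hmem2' : MemLp (fun _ : ℝ => (1:ℝ)) (ENNReal.ofReal p')
        (volume.restrict (Set.Icc a b)) := memLp_const 1
    have h := integral_mul_le_Lp_mul_Lq_of_nonneg hpq
      (Filter.Eventually.of_forall fun x => abs_nonneg (f' x))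
      (Filter.Eventually.of_forall fun _ => zero_le_one) hmem1' hmem2'
    simp only [mul_one, Real.one_rpow] at h
    have hvol : (∫ _x in Set.Icc a b, (1:ℝ)) = b - a := by
      simp [Real.volume_Icc, ENNReal.toReal_ofReal (by linarith : (0:ℝ) ≤ b - a), hab.le]
    rwa [hvol] at h
  -- final computation
  have h2j1 : (0:ℝ) < 2 ^ (j+1) := by positivity
  have hIabs : |∫ x : ℝ, f x * haar (A * x - (ν:ℝ)/2)| ≤ (b - a) * M := by
    rw [hIeq]; exact hstep
  have e3 : (2:ℝ) ^ (j+1) * (2:ℝ) ^ (-(j:ℝ)) = 2 := by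
    rw [← Real.rpow_natCast 2 (j+1), ← Real.rpow_add (by norm_num : (0:ℝ) < 2)]
    push_cast
    rw [show ((j:ℝ) + 1 + -(j:ℝ)) = 1 by ring, Real.rpow_one]
  have e4 : ((2:ℝ) ^ (-(j:ℝ))) ^ (1/p') = (2:ℝ) ^ (-(j:ℝ)/p') := by
    rw [← Real.rpow_mul (by norm_num : (0:ℝ) ≤ 2),
      show (-(j:ℝ) * (1/p')) = -(j:ℝ)/p' by ring]
  have hpow2 : (2:ℝ) ^ (j+1) * ((b - a) * ((b - a) ^ (1/p') * J ^ (1/p))) =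
      2 * 2 ^ (-(j:ℝ)/p') * J ^ (1/p) := by
    rw [hba, e4]
    linear_combination (2 ^ (-(j:ℝ)/p') * J ^ (1/p)) * e3
  calc |2 ^ (j+1) * ∫ x : ℝ, f x * haar (A * x - (ν:ℝ)/2)|
      = 2 ^ (j+1) * |∫ x : ℝ, f x * haar (A * x - (ν:ℝ)/2)| := by
        rw [abs_mul, abs_of_pos h2j1]
    _ ≤ 2 ^ (j+1) * ((b - a) * M) := by
        exact mul_le_mul_of_nonneg_left hIabs h2j1.le
    _ ≤ 2 ^ (j+1) * ((b - a) * ((b - a) ^ (1/p') * J ^ (1/p))) := by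
        apply mul_le_mul_of_nonneg_left _ h2j1.le
        apply mul_le_mul_of_nonneg_left _ (by linarith : (0:ℝ) ≤ b - a)
        rw [mul_comm]
        exact holder
    _ = 2 * 2 ^ (-(j:ℝ)/p') * J ^ (1/p) := hpow2
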